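/- For every b ∈ ℂ and all k, m ∈ ℤ, the identity of ℂ-linear operators on W holds: L_k ∘ G_{m−k} = Θ_m + k·Ξ_m + k²·b(1−2b)·E_m, where Θ_m(f,g) = (−t^m(D+m)g, t^m(D² + (1+2b)m·D + 2bm²)f), Ξ_m(f,g) = ((1−b)·t^m g, t^m(−(1/2+b)·D + (2b²−3b)m)f), and E_m(f,g) = (0, t^m f). In particular, the coefficient of k² in L_k ∘ G_{m−k} is b(1−2b)·E_m. -/

import Mathlib

/- STATEMENT 3: L_k ∘ G_{m−k} = Θ_m + k·Ξ_m + k²·b(1−2b)·E_m, where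
Θ_m(f,g) = (−t^m(D+m)g, t^m(D² + (1+2b)m·D + 2bm²)f),
Ξ_m(f,g) = ((1−b)·t^m g, t^m(−(1/2+b)·D + (2b²−3b)m)f), and
E_m(f,g) = (0, t^m f). -/

open LaurentPolynomial

noncomputable section

abbrev Lp := LaurentPolynomial ℂ

/-- `L_m(f,g) = (t^m(D+mb)f, t^m(D+m(b+1/2))g)` -/
def Lop (D : Lp →ₗ[ℂ] Lp) (b : ℂ) (m : ℤ) : Lp × Lp → Lp × Lp :=
  fun w => (T m * (D w.1 + ((m : ℂ) * b) • w.1),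
            T m * (D w.2 + ((m : ℂ) * (b + 1 / 2)) • w.2))

/-- `G_m(f,g) = (−t^m g, t^m(D+2mb)f)` -/
def Gop (D : Lp →ₗ[ℂ] Lp) (b : ℂ) (m : ℤ) : Lp × Lp → Lp × Lp :=
  fun w => (-(T m * w.2), T m * (D w.1 + (2 * (m : ℂ) * b) • w.1))

/-- `Θ_m(f,g) = (−t^m(D+m)g, t^m(D² + (1+2b)m·D + 2bm²)f)` -/
def Theta (D : Lp →ₗ[ℂ] Lp) (b : ℂ) (m : ℤ) : Lp × Lp → Lp × Lp :=
  fun w => (-(T m * (D w.2 + (m : ℂ) • w.2)),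
            T m * (D (D w.1) + ((1 + 2 * b) * (m : ℂ)) • D w.1
              + (2 * b * (m : ℂ) ^ 2) • w.1))

/-- `Ξ_m(f,g) = ((1−b)·t^m g, t^m(−(1/2+b)·D + (2b²−3b)m)f)` -/
def Xi (D : Lp →ₗ[ℂ] Lp) (b : ℂ) (m : ℤ) : Lp × Lp → Lp × Lp :=
  fun w => ((1 - b) • (T m * w.2),
            T m * ((-(1 / 2 + b)) • D w.1 + ((2 * b ^ 2 - 3 * b) * (m : ℂ)) • w.1))

/-- `E_m(f,g) = (0, t^m f)` -/
def Em (m : ℤ) : Lp × Lp → Lp × Lp :=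
  fun w => (0, T m * w.1)

lemma hDT (D : Lp →ₗ[ℂ] Lp) (hD : ∀ n : ℤ, D (T n) = (n : ℂ) • T n)
    (a : ℤ) (f : Lp) : D (T a * f) = (a : ℂ) • (T a * f) + T a * D f := by
  induction f using LaurentPolynomial.induction_on' with
  | add p q hp hq =>
      simp only [mul_add, map_add, hp, hq, smul_add]; ring
  | C_mul_T n c =>
      have h1 : T a * (C c * T n) = C c * T (a + n) := by
        rw [T_add]; ring
      rw [h1]
      have hC : ∀ (c : ℂ) (p : Lp), C c * p = c • p := fun c p => by
        rw [C_eq_algebraMap, ← Algebra.smul_def]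
      simp only [hC, map_smul, hD]
      simp only [mul_smul_comm, ← T_add]
      push_cast
      module

theorem stmt3 (D : Lp →ₗ[ℂ] Lp)
    (hD : ∀ n : ℤ, D (T n) = (n : ℂ) • T n) (b : ℂ) (k m : ℤ) :
    ∀ w : Lp × Lp,
      Lop D b k (Gop D b (m - k) w)
        = Theta D b m w + (k : ℂ) • Xi D b m w
          + ((k : ℂ) ^ 2 * (b * (1 - 2 * b))) • Em m w := by
  rintro ⟨f, g⟩
  have hkm : k + (m - k) = m := by ring
  simp only [Lop, Gop, Theta, Xi, Em, Prod.mk_add_mk, Prod.smul_mk, Prod.mk.injEq,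
    map_neg, map_add, map_smul, hDT D hD, smul_add, smul_neg, smul_smul,
    mul_add, mul_neg, mul_smul_comm, ← mul_assoc, ← T_add, hkm, smul_zero, add_zero]
  push_cast
  constructor <;> module

end
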